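/- If the three points k'_i, k'_j, k'_k in ℝ² are collinear and the right-hand sides v_i, v_j, v_k sum to zero and lie along the common line direction, then the solution set of the equilibrium system ω_{ij}(k'_i−k'_j)+ω_{ik}(k'_i−k'_k) = v_i, ω_{ij}(k'_j−k'_i)+ω_{jk}(k'_j−k'_k) = v_j, ω_{ik}(k'_k−k'_i)+ω_{jk}(k'_k−k'_j) = v_k, if nonempty and the three points are pairwise distinct, is an affine subspace of positive dimension of ℝ³. -/

import Mathlib

theorem equilibrium_system_collinear_positive_dim
    (ki kj kk vi vj vk d : Fin 2 → ℝ) (hd : d ≠ 0)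
    (hij : ki ≠ kj) (hik : ki ≠ kk) (hjk : kj ≠ kk)
    (hcolj : ∃ α : ℝ, kj - ki = α • d) (hcolk : ∃ β : ℝ, kk - ki = β • d)
    (hv : vi + vj + vk = 0)
    (hvi : ∃ a : ℝ, vi = a • d) (hvj : ∃ a : ℝ, vj = a • d) (hvk : ∃ a : ℝ, vk = a • d)
    (S : Set (Fin 3 → ℝ))
    (hS : S = {w : Fin 3 → ℝ |
      w 0 • (ki - kj) + w 1 • (ki - kk) = vi ∧
      w 0 • (kj - ki) + w 2 • (kj - kk) = vj ∧
      w 1 • (kk - ki) + w 2 • (kk - kj) = vk})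
    (hne : S.Nonempty) :
    ∃ w₀ ∈ S, ∃ u : Fin 3 → ℝ, u ≠ 0 ∧ ∀ t : ℝ, w₀ + t • u ∈ S := by
  obtain ⟨α, hα⟩ := hcolj
  obtain ⟨β, hβ⟩ := hcolk
  have hα0 : α ≠ 0 := by
    intro h
    apply hij
    have : kj - ki = 0 := by rw [hα, h, zero_smul]
    have := sub_eq_zero.mp this
    exact this.symm
  have hβ0 : β ≠ 0 := by
    intro h
    apply hik
    have : kk - ki = 0 := by rw [hβ, h, zero_smul]
    have := sub_eq_zero.mp this
    exact this.symm
  have e1 : ki - kj = (-α) • d := by rw [← neg_sub, hα, neg_smul]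
  have e2 : ki - kk = (-β) • d := by rw [← neg_sub, hβ, neg_smul]
  have e3 : kj - kk = (α - β) • d := by
    have : kj - kk = (kj - ki) - (kk - ki) := by abel
    rw [this, hα, hβ, ← sub_smul]
  have e4 : kk - kj = (β - α) • d := by
    have : kk - kj = (kk - ki) - (kj - ki) := by abel
    rw [this, hα, hβ, ← sub_smul]
  obtain ⟨w₀, hw₀⟩ := hne
  refine ⟨w₀, hw₀, ![β * (α - β), -(α * (α - β)), -(α * β)], ?_, ?_⟩
  · intro h
    have h2 := congrFun h 2
    simp at h2
    rcases h2 with h2 | h2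
    · exact hα0 h2
    · exact hβ0 h2
  · intro t
    rw [hS] at hw₀ ⊢
    obtain ⟨h1, h2, h3⟩ := hw₀
    rw [e1, e2] at h1
    rw [hα, e3] at h2
    rw [hβ, e4] at h3
    refine ⟨?_, ?_, ?_⟩
    · rw [e1, e2, ← h1]
      simp only [Pi.add_apply, Pi.smul_apply, Matrix.cons_val_zero, Matrix.cons_val_one,
        Matrix.head_cons, smul_eq_mul]
      module
    · rw [hα, e3, ← h2]
      simp only [Pi.add_apply, Pi.smul_apply, Matrix.cons_val_zero, Matrix.cons_val_two,
        Matrix.tail_cons, Matrix.head_cons, smul_eq_mul]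
      module
    · rw [hβ, e4, ← h3]
      simp only [Pi.add_apply, Pi.smul_apply, Matrix.cons_val_one, Matrix.cons_val_two,
        Matrix.tail_cons, Matrix.head_cons, Matrix.cons_val_zero, smul_eq_mul]
      module
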